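/- Let k_o > 0, let α : ℝ → ℝ be continuous and bounded, and let d : ℝ → ℝ be twice differentiable with d(t) > 0 for all t ≥ 0, satisfying d''(t) = −k_o·d'(t)/d(t) − α(t) for all t ≥ 0. If d(t) → 0 as t → ∞ and α(t) converges to a constant α⁰ > 0 as t → ∞, then d'(t)/d(t) → −α⁰/k_o and d''(t) → 0 as t → ∞. -/

import Mathlib

open Filter Set

/-- If `g ≥ 0` forces `g' ≤ -c < 0` from some time on, then `g` is
eventually nonpositive. -/
lemma eventually_nonpos_of_deriv_le
    (g : ℝ → ℝ) (hg : Differentiable ℝ g) (c : ℝ) (hc : 0 < c) (t0 : ℝ)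
    (H : ∀ t ≥ t0, 0 ≤ g t → deriv g t ≤ -c) :
    ∀ᶠ t in atTop, g t ≤ 0 := by
  -- Persistence: once nonpositive, stays nonpositive
  have hA : ∀ a, t0 ≤ a → g a ≤ 0 → ∀ t, a ≤ t → g t ≤ 0 := by
    intro a ha hga t hta
    by_contra hgt
    push_neg at hgt
    have hat : a < t := by
      rcases eq_or_lt_of_le hta with h | h
      · exfalso; rw [h] at hga; linarith
      · exact h
    set S : Set ℝ := Icc a t ∩ {x | g x ≤ 0} with hSdef
    have hScomp : IsCompact S :=
      isCompact_Icc.inter_right (isClosed_le hg.continuous continuous_const)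
    have hSne : S.Nonempty := ⟨a, ⟨le_refl a, hat.le⟩, hga⟩
    set s := sSup S with hsdef
    have hs : s ∈ S := hScomp.sSup_mem hSne
    have hgs : g s ≤ 0 := hs.2
    have hst : s < t := by
      rcases eq_or_lt_of_le hs.1.2 with h | h
      · exfalso; rw [h] at hgs; linarith
      · exact h
    have hpos : ∀ x, s < x → x ≤ t → 0 < g x := by
      intro x hsx hxt
      by_contra hgx
      push_neg at hgx
      have hxS : x ∈ S := ⟨⟨le_trans hs.1.1 hsx.le, hxt⟩, hgx⟩
      have : x ≤ s := le_csSup hScomp.bddAbove hxS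
      linarith
    have hanti : StrictAntiOn g (Icc s t) := by
      apply strictAntiOn_of_deriv_neg (convex_Icc s t) hg.continuous.continuousOn
      intro x hx
      rw [interior_Icc] at hx
      have hx0 : t0 ≤ x := le_trans ha (le_trans hs.1.1 hx.1.le)
      have := H x hx0 (hpos x hx.1 hx.2.le).le
      linarith
    have := hanti ⟨le_refl s, hst.le⟩ ⟨hst.le, le_refl t⟩ hst
    linarith
  -- Reaching: g becomes nonpositive at some time
  have hB : ∃ a, t0 ≤ a ∧ g a ≤ 0 := by
    by_contra hpos
    push_neg at hpos
    have hgt0 : 0 < g t0 := hpos t0 le_rfl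
    have hdc : 0 < g t0 / c := div_pos hgt0 hc
    have hhd : Differentiable ℝ (fun x => g x + c * x) := by fun_prop
    have hderiv : ∀ x, deriv (fun x => g x + c * x) x = deriv g x + c := by
      intro x
      have := ((hg x).hasDerivAt.add ((hasDerivAt_id x).const_mul c)).deriv
      simp only [id_eq, mul_one] at this
      exact this
    have hanti : AntitoneOn (fun x => g x + c * x) (Icc t0 (t0 + g t0 / c + 1)) := by
      apply antitoneOn_of_deriv_nonpos (convex_Icc _ _) hhd.continuous.continuousOn
        hhd.differentiableOn
      intro x hx
      rw [interior_Icc] at hx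
      rw [hderiv]
      have := H x hx.1.le (hpos x hx.1.le).le
      linarith
    have key := hanti (left_mem_Icc.2 (by linarith)) (right_mem_Icc.2 (by linarith))
      (by linarith)
    simp only at key
    have hgT : 0 < g (t0 + g t0 / c + 1) := hpos _ (by linarith)
    have hx : c * (t0 + g t0 / c + 1) = c * t0 + g t0 + c := by
      field_simp
    linarith
  obtain ⟨a, ha, hga⟩ := hB
  filter_upwards [eventually_ge_atTop a] with t ht
  exact hA a ha hga t ht

set_option maxHeartbeats 1000000 in
/-- Last part of item 3 of Lemma 1: if the distance `d` governed by the
barrier ODE `d'' = -k_o * d'/d - α` (with `d > 0` on `[0, ∞)`) converges to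
zero and `α` converges to a positive constant `α⁰`, then the divergent flow
`d'/d → -α⁰/k_o` and `d'' → 0`. -/
theorem barrier_divergent_flow_limit
    (k_o : ℝ) (hk : 0 < k_o) (α d : ℝ → ℝ)
    (hα_cont : Continuous α) (hα_bdd : ∃ M, ∀ t, |α t| ≤ M)
    (hd1 : Differentiable ℝ d) (hd2 : Differentiable ℝ (deriv d))
    (hdpos : ∀ t ≥ (0:ℝ), 0 < d t)
    (hode : ∀ t ≥ (0:ℝ),
      deriv (deriv d) t = -k_o * deriv d t / d t - α t)
    (hdlim : Tendsto d atTop (nhds 0))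
    (α0 : ℝ) (hα0 : 0 < α0) (hαlim : Tendsto α atTop (nhds α0)) :
    Tendsto (fun t => deriv d t / d t) atTop (nhds (-(α0 / k_o))) ∧
      Tendsto (deriv (deriv d)) atTop (nhds 0) := by
  obtain ⟨M0, hM0⟩ := hα_bdd
  set M := max M0 1 with hMdef
  have hM : ∀ t, |α t| ≤ M := fun t => (hM0 t).trans (le_max_left _ _)
  have hM1 : (1:ℝ) ≤ M := le_max_right _ _
  -- Step 1 : d' → 0
  have hy : Tendsto (deriv d) atTop (nhds 0) := by
    rw [NormedAddCommGroup.tendsto_nhds_zero]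
    intro ε hε
    set e := ε / 2 with hedef
    have he : 0 < e := by positivity
    have hδ : (0:ℝ) < k_o * e / (2 * M) := by positivity
    have hev : ∀ᶠ t in atTop, d t < k_o * e / (2 * M) ∧ (0:ℝ) ≤ t := by
      filter_upwards [hdlim.eventually_lt_const hδ, eventually_ge_atTop (0:ℝ)] with t h1 h2
      exact ⟨h1, h2⟩
    rw [eventually_atTop] at hev
    obtain ⟨T, hT⟩ := hev
    have hup : ∀ᶠ t in atTop, deriv d t - e ≤ 0 := by
      apply eventually_nonpos_of_deriv_le _ (hd2.sub_const e) M (by linarith) T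
      intro t ht hge
      rw [deriv_sub_const]
      obtain ⟨hdt, ht0⟩ := hT t ht
      rw [hode t ht0]
      have hdp : 0 < d t := hdpos t ht0
      have hyt : e ≤ deriv d t := by linarith
      have h1 : 2 * M ≤ k_o * deriv d t / d t := by
        rw [le_div_iff₀ hdp]
        have h2 : 2 * M * d t ≤ 2 * M * (k_o * e / (2 * M)) :=
          mul_le_mul_of_nonneg_left hdt.le (by linarith)
        have h3 : 2 * M * (k_o * e / (2 * M)) = k_o * e := by field_simp
        nlinarith [hdp]
      have hα' : -M ≤ α t := (abs_le.1 (hM t)).1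
      have hre : -k_o * deriv d t / d t = -(k_o * deriv d t / d t) := by ring
      rw [hre]
      linarith
    have hlo : ∀ᶠ t in atTop, -deriv d t - e ≤ 0 := by
      have hdiff : Differentiable ℝ (fun t => -deriv d t - e) := by fun_prop
      apply eventually_nonpos_of_deriv_le _ hdiff M (by linarith) T
      intro t ht hge
      have hder : deriv (fun t => -deriv d t - e) t = -(deriv (deriv d) t) := by
        rw [deriv_sub_const]; exact (hd2 t).hasDerivAt.neg.deriv
      rw [hder, hode t (hT t ht).2]
      obtain ⟨hdt, ht0⟩ := hT t ht
      have hdp : 0 < d t := hdpos t ht0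
      have hyt : deriv d t ≤ -e := by linarith
      have h1 : k_o * deriv d t / d t ≤ -(2 * M) := by
        rw [div_le_iff₀ hdp]
        have h2 : 2 * M * d t ≤ 2 * M * (k_o * e / (2 * M)) :=
          mul_le_mul_of_nonneg_left hdt.le (by linarith)
        have h3 : 2 * M * (k_o * e / (2 * M)) = k_o * e := by field_simp
        nlinarith [hdp]
      have hα' : α t ≤ M := (abs_le.1 (hM t)).2
      have hre : -k_o * deriv d t / d t = -(k_o * deriv d t / d t) := by ring
      rw [hre]
      linarith
    filter_upwards [hup, hlo] with t h1 h2
    rw [Real.norm_eq_abs, abs_lt]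
    constructor <;> linarith
  -- Step 2 : d'/d → -(α0/k_o)
  set c0 := α0 / k_o with hc0def
  have hkc0 : k_o * c0 = α0 := by
    rw [hc0def]; field_simp
  have hφ : Tendsto (fun t => deriv d t / d t) atTop (nhds (-(α0 / k_o))) := by
    rw [Metric.tendsto_nhds]
    intro ε hε
    set e := ε / 2 with hedef
    have he : 0 < e := by positivity
    set B := |c0| + e + 1 with hBdef
    have hB : 0 < B := by positivity
    have hae : |e| = e := abs_of_pos he
    have hBe1 : |c0 - e| ≤ B := by
      have h := abs_sub c0 e
      rw [hae] at h
      rw [hBdef]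
      linarith
    have hBe2 : |c0 + e| ≤ B := by
      have h := abs_add_le c0 e
      rw [hae] at h
      rw [hBdef]
      linarith
    have hmarg1 : (0:ℝ) < k_o * e / 4 := by positivity
    have hmarg2 : (0:ℝ) < k_o * e / (4 * B) := by positivity
    have hev : ∀ᶠ t in atTop,
        |α t - α0| < k_o * e / 4 ∧ |deriv d t| < k_o * e / (4 * B) ∧ (0:ℝ) ≤ t := by
      have h1 : ∀ᶠ t in atTop, |α t - α0| < k_o * e / 4 := by
        have := Metric.tendsto_nhds.1 hαlim _ hmarg1
        filter_upwards [this] with t ht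
        rwa [Real.dist_eq] at ht
      have h2 : ∀ᶠ t in atTop, |deriv d t| < k_o * e / (4 * B) := by
        have := Metric.tendsto_nhds.1 hy _ hmarg2
        filter_upwards [this] with t ht
        rwa [Real.dist_eq, sub_zero] at ht
      filter_upwards [h1, h2, eventually_ge_atTop (0:ℝ)] with t a b c
      exact ⟨a, b, c⟩
    rw [eventually_atTop] at hev
    obtain ⟨T, hT⟩ := hev
    -- upper barrier : d' + (c0 - e) d ≤ 0 eventually
    have hg3 : ∀ᶠ t in atTop, deriv d t + (c0 - e) * d t ≤ 0 := by
      have hdiff : Differentiable ℝ (fun t => deriv d t + (c0 - e) * d t) := by fun_prop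
      apply eventually_nonpos_of_deriv_le _ hdiff (k_o * e / 2) (by positivity) T
      intro t ht hge
      obtain ⟨hαt, hyt, ht0⟩ := hT t ht
      have hdp : 0 < d t := hdpos t ht0
      have hder : deriv (fun t => deriv d t + (c0 - e) * d t) t
          = deriv (deriv d) t + (c0 - e) * deriv d t :=
        ((hd2 t).hasDerivAt.add ((hd1 t).hasDerivAt.const_mul (c0 - e))).deriv
      rw [hder, hode t ht0]
      -- from 0 ≤ d' + (c0 - e) d : (e - c0) ≤ d'/d
      have hq : e - c0 ≤ deriv d t / d t := by
        rw [le_div_iff₀ hdp]; linarith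
      have hq2 : -k_o * deriv d t / d t ≤ -(k_o * (e - c0)) := by
        have := mul_le_mul_of_nonneg_left hq hk.le
        have hre : -k_o * deriv d t / d t = -(k_o * (deriv d t / d t)) := by ring
        rw [hre]; linarith
      have habs : |(c0 - e) * deriv d t| ≤ k_o * e / 4 := by
        rw [abs_mul]
        calc |c0 - e| * |deriv d t| ≤ B * (k_o * e / (4 * B)) :=
              mul_le_mul hBe1 hyt.le (abs_nonneg _) hB.le
          _ = k_o * e / 4 := by field_simp
      have h1 := (abs_le.1 habs).2
      have h2 := (abs_lt.1 hαt).1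
      have hk2 : -(k_o * (e - c0)) = α0 - k_o * e := by rw [← hkc0]; ring
      linarith
    -- lower barrier : -d' - (c0 + e) d ≤ 0 eventually
    have hg4 : ∀ᶠ t in atTop, -deriv d t - (c0 + e) * d t ≤ 0 := by
      have hdiff : Differentiable ℝ (fun t => -deriv d t - (c0 + e) * d t) := by fun_prop
      apply eventually_nonpos_of_deriv_le _ hdiff (k_o * e / 2) (by positivity) T
      intro t ht hge
      obtain ⟨hαt, hyt, ht0⟩ := hT t ht
      have hdp : 0 < d t := hdpos t ht0
      have hder : deriv (fun t => -deriv d t - (c0 + e) * d t) t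
          = -(deriv (deriv d) t) - (c0 + e) * deriv d t :=
        (((hd2 t).hasDerivAt.neg).sub ((hd1 t).hasDerivAt.const_mul (c0 + e))).deriv
      rw [hder, hode t ht0]
      have hq : deriv d t / d t ≤ -(c0 + e) := by
        rw [div_le_iff₀ hdp]; linarith
      have hq2 : k_o * (deriv d t / d t) ≤ k_o * (-(c0 + e)) :=
        mul_le_mul_of_nonneg_left hq hk.le
      have habs : |(c0 + e) * deriv d t| ≤ k_o * e / 4 := by
        rw [abs_mul]
        calc |c0 + e| * |deriv d t| ≤ B * (k_o * e / (4 * B)) :=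
              mul_le_mul hBe2 hyt.le (abs_nonneg _) hB.le
          _ = k_o * e / 4 := by field_simp
      have h1 := (abs_le.1 habs).1
      have h2 := (abs_lt.1 hαt).2
      have hre : -(-k_o * deriv d t / d t - α t) - (c0 + e) * deriv d t
          = k_o * (deriv d t / d t) + α t - (c0 + e) * deriv d t := by ring
      rw [hre]
      have hk2 : k_o * (-(c0 + e)) = -α0 - k_o * e := by rw [← hkc0]; ring
      linarith
    filter_upwards [hg3, hg4, eventually_ge_atTop (0:ℝ)] with t h3 h4 ht0
    have hdp : 0 < d t := hdpos t ht0
    rw [Real.dist_eq, sub_neg_eq_add]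
    have hu : deriv d t / d t ≤ e - c0 := by
      rw [div_le_iff₀ hdp]; linarith
    have hl : -(c0 + e) ≤ deriv d t / d t := by
      rw [le_div_iff₀ hdp]; linarith
    rw [abs_lt]
    constructor <;> [skip; skip]
    · simp only [hc0def] at hl ⊢; linarith
    · simp only [hc0def] at hu ⊢; linarith
  refine ⟨hφ, ?_⟩
  -- Step 3 : d'' → 0
  have h3 : Tendsto (fun t => -k_o * (deriv d t / d t) - α t) atTop (nhds 0) := by
    have := (hφ.const_mul (-k_o)).sub hαlim
    have heq : -k_o * -(α0 / k_o) - α0 = 0 := by field_simp; ring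
    rwa [heq] at this
  refine Tendsto.congr' ?_ h3
  filter_upwards [eventually_ge_atTop (0:ℝ)] with t ht
  rw [hode t ht]
  ring
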